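/- Let a, b be coprime positive integers and n a positive integer, let u be the step sequence of an (a,b)-Dyck path P of size n, and let u' be either (case Q = P_1) u' := u, or (case Q = P_0) u' := u_0 − u, where u_0(k) := ⌊b(k−1)/a⌋ is the step sequence of the lowest path P_0; in both cases a·u'_t ≤ b(t−1) for all t. Define v_1, …, v_b entrywise from w := a·u' by v_1 := ⌈w/b⌉ and v_i := ⌈(w − (v_1 + … + v_{i−1}))/(b−i+1)⌉ for 2 ≤ i ≤ b. For each 1 ≤ i ≤ b define a permutation w_i of {1,…,an} by: start with S = {1,…,an}, and for t = an, an−1, …, 1, let w_i(t) be the (v_i(t)+1)-th smallest element of S and remove it from S. Let w'_i be the inverse permutation of w_i, and define the sequence μ of length abn by μ_{b(p−1)+q} := w'_q(p) for 1 ≤ p ≤ an and 1 ≤ q ≤ b. Then: (1) μ is a b-Stirling permutation of size an; and (2) μ = ζ(a·u'), the multi-permutation obtained by the block-insertion map applied to the sequence a·u'. -/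

import Mathlib

/-- `zeta b s N` : block-insertion map producing a multi-permutation. -/
def zeta (b : ℕ) (s : ℕ → ℕ) : ℕ → List ℕ
  | 0 => []
  | n + 1 =>
      (zeta b s n).take (s (n + 1)) ++ List.replicate b (n + 1) ++
        (zeta b s n).drop (s (n + 1))

/-- `π` is a `b`-Stirling permutation of size `N`. -/
def IsStirling (b N : ℕ) (π : List ℕ) : Prop :=
  π.length = b * N ∧
  (∀ v, 1 ≤ v → v ≤ N → π.count v = b) ∧
  (∀ v, v ∈ π → 1 ≤ v ∧ v ≤ N) ∧
  ∀ p q r : Fin π.length, p < q → q < r → π.get p = π.get r → π.get p ≤ π.get q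

/-- `Spartial b w i = v 1 + ⋯ + v i` for the greedy ceiling decomposition
`v 1 = ⌈w/b⌉`, `v i = ⌈(w - (v 1 + ⋯ + v (i-1)))/(b-i+1)⌉`. -/
def Spartial (b w : ℕ) : ℕ → ℕ
  | 0 => 0
  | k + 1 => Spartial b w k + (w - Spartial b w k + (b - k) - 1) / (b - k)

/-- `vval b w i = v i` of the greedy ceiling decomposition of `w` into `b`
parts. -/
def vval (b w i : ℕ) : ℕ := Spartial b w i - Spartial b w (i - 1)

/-- `remSet N v k` : the set `S ⊆ {1,…,N}` remaining after the first `k`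
selections of the algorithm which, for `t = N, N-1, …`, selects and removes the
`(v t + 1)`-th smallest element of `S`. -/
def remSet (N : ℕ) (v : ℕ → ℕ) : ℕ → Finset ℕ
  | 0 => Finset.Icc 1 N
  | k + 1 => (remSet N v k).erase
      (((remSet N v k).sort (· ≤ ·)).getD (v (N - k)) 0)

/-- `wperm N v t` : the permutation value `w(t)`, the `(v t + 1)`-th smallest
element of the set remaining when `t` is processed (processing order
`t = N, N-1, …, 1`). -/
def wperm (N : ℕ) (v : ℕ → ℕ) (t : ℕ) : ℕ :=
  ((remSet N v (N - t)).sort (· ≤ ·)).getD (v t) 0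

/-- `winv N v p` : the inverse permutation, the (unique) `t ∈ [1,N]` with
`wperm N v t = p`. -/
noncomputable def winv (N : ℕ) (v : ℕ → ℕ) (p : ℕ) : ℕ :=
  sInf {t | 1 ≤ t ∧ t ≤ N ∧ wperm N v t = p}

/-- the multi-permutation `μ` of length `b*N` defined by
`μ (b*(p-1)+q) = w'_q(p)`, where `w'_q` is the inverse of the permutation
`w_q` built from the sequences `v q = vval b (a * u' ·) q`. -/
noncomputable def muList (a b N : ℕ) (u' : ℕ → ℕ) : List ℕ :=
  (List.range (b * N)).map (fun idx =>
    winv N (fun t => vval b (a * u' t) (idx % b + 1)) (idx / b + 1))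


namespace StirlingAux

/-! ### Generic sorted-list helpers -/

lemma sort_eq_of (s : Finset ℕ) (l : List ℕ) (hnd : l.Nodup)
    (hsort : l.Pairwise (· ≤ ·)) (hmem : ∀ x, x ∈ l ↔ x ∈ s) :
    s.sort (· ≤ ·) = l := by
  apply List.Perm.eq_of_pairwise' (Finset.pairwise_sort _ _) hsort ?_
  apply List.perm_of_nodup_nodup_toFinset_eq (Finset.sort_nodup _ _) hnd
  ext x
  simp only [List.mem_toFinset, Finset.mem_sort, hmem]

lemma sort_Icc (N : ℕ) : (Finset.Icc 1 N).sort (· ≤ ·) = List.range' 1 N := by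
  apply sort_eq_of
  · exact List.nodup_range' (s := 1) (n := N)
  · exact List.Pairwise.imp le_of_lt (List.pairwise_lt_range' (s := 1) (n := N))
  · intro x
    simp only [List.mem_range'_1, Finset.mem_Icc]
    omega

/-- The order embedding `{1,…,N-1} → {1,…,N} \ {e}`. -/
def emb (e x : ℕ) : ℕ := if x < e then x else x + 1

lemma emb_strictMono (e : ℕ) : StrictMono (emb e) := by
  intro x y h
  unfold emb
  split <;> split <;> omega

lemma sort_image (e : ℕ) (s : Finset ℕ) :
    (s.image (emb e)).sort (· ≤ ·) = (s.sort (· ≤ ·)).map (emb e) := by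
  apply sort_eq_of
  · exact List.Nodup.map (emb_strictMono e).injective (Finset.sort_nodup _ _)
  · exact List.Pairwise.map (emb e) (fun a b h => (emb_strictMono e).monotone h)
      (Finset.pairwise_sort _ _)
  · intro x
    simp only [List.mem_map, Finset.mem_sort, Finset.mem_image]

lemma erase_Icc_eq_image (N e : ℕ) (he1 : 1 ≤ e) (he2 : e ≤ N) :
    (Finset.Icc 1 N).erase e = (Finset.Icc 1 (N - 1)).image (emb e) := by
  ext x
  simp only [Finset.mem_erase, Finset.mem_Icc, Finset.mem_image, emb]
  constructor
  · rintro ⟨hne, h1, h2⟩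
    rcases lt_or_gt_of_ne hne with h | h
    · exact ⟨x, by omega, by rw [if_pos h]⟩
    · exact ⟨x - 1, by omega, by rw [if_neg (by omega)]; omega⟩
  · rintro ⟨y, hy, rfl⟩
    split <;> omega

/-! ### Closed form for the greedy ceiling decomposition -/

lemma Spartial_closed (b m r : ℕ) (hb : 0 < b) (hr : r < b) :
    ∀ k, k ≤ b → Spartial b (b * m + r) k = k * m + min k r := by
  intro k
  induction k with
  | zero => intro _; simp [Spartial]
  | succ k ih =>
    intro hk
    have hS := ih (by omega)
    obtain ⟨d, hdd⟩ : ∃ d, b - k = d := ⟨_, rfl⟩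
    have hd1 : 0 < d := by omega
    have e2 : k * m + d * m = b * m := by
      rw [← Nat.add_mul]; congr 1; omega
    rw [show Spartial b (b*m+r) (k+1) = Spartial b (b*m+r) k +
        (b*m+r - Spartial b (b*m+r) k + (b - k) - 1) / (b - k) from rfl, hS, hdd,
        Nat.succ_mul]
    rcases le_or_gt r k with h | h
    · rw [min_eq_right h, min_eq_right (by omega : r ≤ k + 1)]
      have hnum : b * m + r - (k * m + r) + d - 1 = d * m + (d - 1) := by omega
      rw [hnum, Nat.mul_add_div hd1, Nat.div_eq_of_lt (by omega)]
      omega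
    · rw [min_eq_left (by omega : k ≤ r), min_eq_left (by omega : k + 1 ≤ r)]
      have hnum : b * m + r - (k * m + k) + d - 1 = d * m + (r - k + d - 1) := by
        omega
      rw [hnum, Nat.mul_add_div hd1,
          Nat.div_eq_of_lt_le (k := 1) (by omega) (by omega)]
      omega

lemma vval_closed (b m r q : ℕ) (hb : 0 < b) (hr : r < b) (hq1 : 1 ≤ q)
    (hq2 : q ≤ b) :
    vval b (b * m + r) q = m + (if q ≤ r then 1 else 0) := by
  obtain ⟨q', rfl⟩ : ∃ q', q = q' + 1 := ⟨q - 1, by omega⟩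
  unfold vval
  rw [show q' + 1 - 1 = q' from rfl,
      Spartial_closed b m r hb hr (q'+1) hq2,
      Spartial_closed b m r hb hr q' (by omega), Nat.succ_mul]
  split <;> omega

lemma vval_eq (b w q : ℕ) (hb : 0 < b) (hq1 : 1 ≤ q) (hq2 : q ≤ b) :
    vval b w q = w / b + (if q ≤ w % b then 1 else 0) := by
  have h := Nat.div_add_mod w b
  conv_lhs => rw [← h]
  exact vval_closed b (w / b) (w % b) q hb (Nat.mod_lt w hb) hq1 hq2

/-- Fact (A): validity of the selection index. -/
lemma vval_lt (b w q t : ℕ) (hb : 0 < b) (hq1 : 1 ≤ q) (hq2 : q ≤ b)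
    (ht : 1 ≤ t) (hw : w ≤ b * (t - 1)) : vval b w q < t := by
  rw [vval_eq b w q hb hq1 hq2]
  have h := Nat.div_add_mod w b
  have hm := Nat.mod_lt w hb
  split
  · rename_i hqr
    have : b * (w / b) < b * (t - 1) := by omega
    have := Nat.lt_of_mul_lt_mul_left this
    omega
  · have : b * (w / b) ≤ b * (t - 1) := by omega
    have := Nat.le_of_mul_le_mul_left this hb
    omega

/-- Fact (B): the window property of the greedy decomposition. -/
lemma vval_window (b w q : ℕ) (hb : 0 < b) (hq1 : 1 ≤ q) (hq2 : q ≤ b) :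
    w ≤ b * vval b w q + (q - 1) ∧ b * vval b w q + (q - 1) < w + b := by
  rw [vval_eq b w q hb hq1 hq2, Nat.mul_add]
  have h := Nat.div_add_mod w b
  have hm := Nat.mod_lt w hb
  split <;> simp only [Nat.mul_one, Nat.mul_zero] <;> omega

/-! ### The selection algorithm -/

lemma remSet_spec (N : ℕ) (v : ℕ → ℕ) (hv : ∀ t, 1 ≤ t → t ≤ N → v t < t) :
    ∀ k, k ≤ N → remSet N v k ⊆ Finset.Icc 1 N ∧ (remSet N v k).card = N - k := by
  intro k
  induction k with
  | zero =>
    intro _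
    refine ⟨subset_rfl, ?_⟩
    show (Finset.Icc 1 N).card = N - 0
    rw [Nat.card_Icc]
    omega
  | succ k ih =>
    intro hk
    obtain ⟨hsub, hcard⟩ := ih (by omega)
    have hvlt : v (N - k) < N - k := hv _ (by omega) (by omega)
    have hlen : ((remSet N v k).sort (· ≤ ·)).length = N - k := by
      rw [Finset.length_sort, hcard]
    have hmem : ((remSet N v k).sort (· ≤ ·)).getD (v (N - k)) 0 ∈ remSet N v k := by
      rw [List.getD_eq_getElem _ _ (by rw [hlen]; omega)]
      exact (Finset.mem_sort _).mp (List.getElem_mem _)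
    constructor
    · exact Finset.Subset.trans (Finset.erase_subset _ _) hsub
    · show ((remSet N v k).erase _).card = N - (k + 1)
      rw [Finset.card_erase_of_mem hmem, hcard]
      omega

lemma wperm_mem (N : ℕ) (v : ℕ → ℕ) (hv : ∀ t, 1 ≤ t → t ≤ N → v t < t)
    (t : ℕ) (ht1 : 1 ≤ t) (ht2 : t ≤ N) :
    wperm N v t ∈ remSet N v (N - t) := by
  obtain ⟨hsub, hcard⟩ := remSet_spec N v hv (N - t) (by omega)
  have hlen : ((remSet N v (N - t)).sort (· ≤ ·)).length = t := by
    rw [Finset.length_sort, hcard]; omega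
  unfold wperm
  rw [List.getD_eq_getElem _ _ (by rw [hlen]; exact hv t ht1 ht2)]
  exact (Finset.mem_sort _).mp (List.getElem_mem _)

lemma wperm_mem_Icc (N : ℕ) (v : ℕ → ℕ) (hv : ∀ t, 1 ≤ t → t ≤ N → v t < t)
    (t : ℕ) (ht1 : 1 ≤ t) (ht2 : t ≤ N) :
    wperm N v t ∈ Finset.Icc 1 N :=
  (remSet_spec N v hv (N - t) (by omega)).1 (wperm_mem N v hv t ht1 ht2)

lemma wperm_not_mem (N : ℕ) (v : ℕ → ℕ) (t : ℕ) (ht1 : 1 ≤ t) (ht2 : t ≤ N) :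
    wperm N v t ∉ remSet N v (N - t + 1) := by
  show wperm N v t ∉ (remSet N v (N - t)).erase
      (((remSet N v (N - t)).sort (· ≤ ·)).getD (v (N - (N - t))) 0)
  rw [show N - (N - t) = t by omega]
  exact Finset.notMem_erase _ _

lemma remSet_anti (N : ℕ) (v : ℕ → ℕ) (k k' : ℕ) (h : k ≤ k') :
    remSet N v k' ⊆ remSet N v k := by
  obtain ⟨j, rfl⟩ : ∃ j, k' = k + j := ⟨k' - k, by omega⟩
  clear h
  induction j with
  | zero => exact subset_rfl
  | succ j ih =>
    refine Finset.Subset.trans ?_ ih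
    exact Finset.erase_subset _ _

lemma wperm_injOn (N : ℕ) (v : ℕ → ℕ) (hv : ∀ t, 1 ≤ t → t ≤ N → v t < t)
    (t t' : ℕ) (ht1 : 1 ≤ t) (ht2 : t ≤ N) (ht1' : 1 ≤ t') (ht2' : t' ≤ N)
    (heq : wperm N v t = wperm N v t') : t = t' := by
  rcases lt_trichotomy t t' with h | h | h
  · exfalso
    have h1 := wperm_mem N v hv t ht1 ht2
    have h2 := wperm_not_mem N v t' ht1' ht2'
    have h3 : remSet N v (N - t) ⊆ remSet N v (N - t' + 1) :=
      remSet_anti N v _ _ (by omega)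
    rw [heq] at h1
    exact h2 (h3 h1)
  · exact h
  · exfalso
    have h1 := wperm_mem N v hv t' ht1' ht2'
    have h2 := wperm_not_mem N v t ht1 ht2
    have h3 : remSet N v (N - t') ⊆ remSet N v (N - t + 1) :=
      remSet_anti N v _ _ (by omega)
    rw [← heq] at h1
    exact h2 (h3 h1)

lemma winv_eq (N : ℕ) (v : ℕ → ℕ) (hv : ∀ t, 1 ≤ t → t ≤ N → v t < t)
    (t p : ℕ) (ht1 : 1 ≤ t) (ht2 : t ≤ N) (hp : wperm N v t = p) :
    winv N v p = t := by
  unfold winv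
  have hset : {t' | 1 ≤ t' ∧ t' ≤ N ∧ wperm N v t' = p} = {t} := by
    ext t'
    simp only [Set.mem_setOf_eq, Set.mem_singleton_iff]
    constructor
    · rintro ⟨h1, h2, h3⟩
      exact wperm_injOn N v hv t' t h1 h2 ht1 ht2 (h3.trans hp.symm)
    · rintro rfl
      exact ⟨ht1, ht2, hp⟩
  rw [hset]
  exact csInf_singleton t

lemma wperm_surj (N : ℕ) (v : ℕ → ℕ) (hv : ∀ t, 1 ≤ t → t ≤ N → v t < t)
    (p : ℕ) (hp1 : 1 ≤ p) (hp2 : p ≤ N) :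
    ∃ t, 1 ≤ t ∧ t ≤ N ∧ wperm N v t = p := by
  have := Finset.surj_on_of_inj_on_of_card_le
    (s := Finset.Icc 1 N) (t := Finset.Icc 1 N)
    (fun t _ => wperm N v t)
    (fun t ht => by
      rw [Finset.mem_Icc] at ht
      exact wperm_mem_Icc N v hv t ht.1 ht.2)
    (fun t t' ht ht' heq => by
      rw [Finset.mem_Icc] at ht ht'
      exact wperm_injOn N v hv t t' ht.1 ht.2 ht'.1 ht'.2 heq)
    le_rfl p (by rw [Finset.mem_Icc]; exact ⟨hp1, hp2⟩)
  obtain ⟨t, ht, heq⟩ := this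
  rw [Finset.mem_Icc] at ht
  exact ⟨t, ht.1, ht.2, heq.symm⟩

/-! ### Restriction: the algorithm for `N` vs the algorithm for `N - 1` -/

section Restrict

variable (N : ℕ) (v : ℕ → ℕ)

lemma remSet_one (hv : ∀ t, 1 ≤ t → t ≤ N → v t < t) (hN : 1 ≤ N) :
    remSet N v 1 = (Finset.Icc 1 N).erase (v N + 1) := by
  show (remSet N v 0).erase (((remSet N v 0).sort (· ≤ ·)).getD (v (N - 0)) 0)
      = _
  have h0 : remSet N v 0 = Finset.Icc 1 N := rfl
  rw [h0, sort_Icc, Nat.sub_zero]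
  congr 1
  have hlt : v N < (List.range' 1 N).length := by
    rw [List.length_range']; exact hv N hN le_rfl
  rw [List.getD_eq_getElem _ _ hlt, List.getElem_range']
  omega

lemma remSet_image (hv : ∀ t, 1 ≤ t → t ≤ N → v t < t) (hN : 1 ≤ N) :
    ∀ k, k ≤ N - 1 →
      remSet N v (k + 1) = (remSet (N - 1) v k).image (emb (v N + 1)) := by
  have hv' : ∀ t, 1 ≤ t → t ≤ N - 1 → v t < t := fun t h1 h2 => hv t h1 (by omega)
  have hvN := hv N hN le_rfl
  intro k
  induction k with
  | zero =>
    intro _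
    rw [remSet_one N v hv hN]
    exact erase_Icc_eq_image N (v N + 1) (by omega) (by omega)
  | succ k ih =>
    intro hk
    have hIH := ih (by omega)
    have ht0 : N - (k + 1) = N - 1 - k := by omega
    show (remSet N v (k + 1)).erase
        (((remSet N v (k + 1)).sort (· ≤ ·)).getD (v (N - (k + 1))) 0) = _
    rw [ht0, hIH, sort_image]
    obtain ⟨hsub, hcard⟩ := remSet_spec (N - 1) v hv' k (by omega)
    have hlen : ((remSet (N-1) v k).sort (· ≤ ·)).length = N - 1 - k := by
      rw [Finset.length_sort, hcard]
    have hidx : v (N - 1 - k) < N - 1 - k := hv' _ (by omega) (by omega)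
    rw [List.getD_eq_getElem _ _ (by rw [List.length_map, hlen]; exact hidx),
        List.getElem_map, ← List.getD_eq_getElem _ 0 (by rw [hlen]; exact hidx),
        ← Finset.image_erase (emb_strictMono (v N + 1)).injective]
    rfl

lemma wperm_top (hv : ∀ t, 1 ≤ t → t ≤ N → v t < t) (hN : 1 ≤ N) :
    wperm N v N = v N + 1 := by
  unfold wperm
  rw [Nat.sub_self]
  have h0 : remSet N v 0 = Finset.Icc 1 N := rfl
  rw [h0, sort_Icc]
  have hlt : v N < (List.range' 1 N).length := by
    rw [List.length_range']; exact hv N hN le_rfl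
  rw [List.getD_eq_getElem _ _ hlt, List.getElem_range']
  omega

lemma wperm_restrict (hv : ∀ t, 1 ≤ t → t ≤ N → v t < t) (hN : 1 ≤ N)
    (t : ℕ) (ht1 : 1 ≤ t) (ht2 : t ≤ N - 1) :
    wperm N v t = emb (v N + 1) (wperm (N - 1) v t) := by
  have hv' : ∀ t, 1 ≤ t → t ≤ N - 1 → v t < t := fun t h1 h2 => hv t h1 (by omega)
  unfold wperm
  rw [show N - t = (N - 1 - t) + 1 by omega,
      remSet_image N v hv hN (N - 1 - t) (by omega), sort_image]
  obtain ⟨hsub, hcard⟩ := remSet_spec (N - 1) v hv' (N - 1 - t) (by omega)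
  have hlen : ((remSet (N-1) v (N-1-t)).sort (· ≤ ·)).length = t := by
    rw [Finset.length_sort, hcard]; omega
  have hidx : v t < t := hv' t ht1 ht2
  rw [List.getD_eq_getElem _ _ (by rw [List.length_map, hlen]; exact hidx),
      List.getElem_map, ← List.getD_eq_getElem _ 0 (by rw [hlen]; exact hidx)]

lemma winv_top (hv : ∀ t, 1 ≤ t → t ≤ N → v t < t) (hN : 1 ≤ N) :
    winv N v (v N + 1) = N :=
  winv_eq N v hv N _ hN le_rfl (wperm_top N v hv hN)

lemma winv_restrict (hv : ∀ t, 1 ≤ t → t ≤ N → v t < t) (hN : 1 ≤ N)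
    (p : ℕ) (hp1 : 1 ≤ p) (hp2 : p ≤ N) (hpe : p ≠ v N + 1) :
    winv N v p = winv (N - 1) v (if p < v N + 1 then p else p - 1) := by
  have hv' : ∀ t, 1 ≤ t → t ≤ N - 1 → v t < t := fun t h1 h2 => hv t h1 (by omega)
  have hvN := hv N hN le_rfl
  set p' := if p < v N + 1 then p else p - 1 with hp'
  have hp'' : 1 ≤ p' ∧ p' ≤ N - 1 := by
    rw [hp']; split <;> omega
  obtain ⟨t, ht1, ht2, ht3⟩ := wperm_surj (N - 1) v hv' p' hp''.1 hp''.2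
  have hw : wperm N v t = p := by
    rw [wperm_restrict N v hv hN t ht1 ht2, ht3, hp']
    unfold emb
    split_ifs <;> omega
  rw [winv_eq N v hv t p ht1 (by omega) hw,
      winv_eq (N - 1) v hv' t p' ht1 ht2 ht3]

end Restrict

/-! ### Properties of `zeta` -/

lemma zeta_length (b : ℕ) (s : ℕ → ℕ) : ∀ n, (zeta b s n).length = b * n := by
  intro n
  induction n with
  | zero => rfl
  | succ n ih =>
    show ((zeta b s n).take (s (n+1)) ++ List.replicate b (n+1) ++
        (zeta b s n).drop (s (n+1))).length = b * (n + 1)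
    rw [List.length_append, List.length_append, List.length_take,
        List.length_replicate, List.length_drop, ih, Nat.mul_succ]
    omega

lemma zeta_mem (b : ℕ) (s : ℕ → ℕ) :
    ∀ n x, x ∈ zeta b s n → 1 ≤ x ∧ x ≤ n := by
  intro n
  induction n with
  | zero => intro x hx; cases hx
  | succ n ih =>
    intro x hx
    rcases List.mem_append.mp hx with hx | hx
    · rcases List.mem_append.mp hx with hx | hx
      · have := ih x (List.mem_of_mem_take hx); omega
      · have := List.eq_of_mem_replicate hx; omega
    · have := ih x (List.mem_of_mem_drop hx); omega

lemma zeta_count (b : ℕ) (s : ℕ → ℕ) :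
    ∀ n x, 1 ≤ x → x ≤ n → (zeta b s n).count x = b := by
  intro n
  induction n with
  | zero => intro x h1 h2; omega
  | succ n ih =>
    intro x h1 h2
    show (((zeta b s n).take (s (n+1)) ++ List.replicate b (n+1)) ++
        (zeta b s n).drop (s (n+1))).count x = b
    rw [List.count_append, List.count_append]
    have hc : ((zeta b s n).take (s (n+1))).count x +
        ((zeta b s n).drop (s (n+1))).count x = (zeta b s n).count x := by
      rw [← List.count_append, List.take_append_drop]
    rcases Nat.lt_or_ge x (n + 1) with h | h
    · rw [List.count_replicate, if_neg (by simp; omega)]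
      have := ih x h1 (by omega)
      omega
    · have hx : x = n + 1 := by omega
      subst hx
      rw [List.count_replicate, if_pos (by simp)]
      have hz : (zeta b s n).count (n+1) = 0 := by
        rw [List.count_eq_zero]
        intro hmem
        have := zeta_mem b s n _ hmem
        omega
      omega

lemma zeta_getD_le (b : ℕ) (s : ℕ → ℕ) (n j : ℕ) :
    (zeta b s n).getD j 0 ≤ n := by
  rcases Nat.lt_or_ge j (zeta b s n).length with hj | hj
  · rw [List.getD_eq_getElem _ _ hj]
    exact (zeta_mem b s n _ (List.getElem_mem hj)).2
  · rw [List.getD_eq_default _ _ hj]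
    omega

lemma zeta_succ_getD (b : ℕ) (s : ℕ → ℕ) (n : ℕ) (hw : s (n + 1) ≤ b * n)
    (i : ℕ) :
    (zeta b s (n + 1)).getD i 0 =
      if i < s (n + 1) then (zeta b s n).getD i 0
      else if i < s (n + 1) + b then n + 1
      else (zeta b s n).getD (i - b) 0 := by
  have hZ : (zeta b s n).length = b * n := zeta_length b s n
  have hzdef : zeta b s (n+1) = ((zeta b s n).take (s (n+1)) ++
      List.replicate b (n+1)) ++ (zeta b s n).drop (s (n+1)) := rfl
  have hta : ((zeta b s n).take (s (n+1))).length = s (n+1) := by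
    rw [List.length_take, hZ]; omega
  have hl1 : (((zeta b s n).take (s (n+1))) ++ List.replicate b (n+1)).length
      = s (n+1) + b := by
    rw [List.length_append, hta, List.length_replicate]
  have hlen : ((((zeta b s n).take (s (n+1))) ++ List.replicate b (n+1)) ++
      (zeta b s n).drop (s (n+1))).length = b * (n+1) := by
    rw [← hzdef]; exact zeta_length b s (n+1)
  rw [hzdef]
  rcases Nat.lt_or_ge i (s (n+1)) with h1 | h1
  · rw [if_pos h1]
    rw [List.getD_eq_getElem _ _ (by rw [hlen, Nat.mul_succ]; omega),
        List.getD_eq_getElem _ _ (by omega)]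
    rw [List.getElem_append_left (by rw [hl1]; omega),
        List.getElem_append_left (by rw [hta]; omega),
        List.getElem_take]
  · rw [if_neg (by omega)]
    rcases Nat.lt_or_ge i (s (n+1) + b) with h2 | h2
    · rw [if_pos h2]
      rw [List.getD_eq_getElem _ _ (by rw [hlen, Nat.mul_succ]; omega)]
      rw [List.getElem_append_left (by rw [hl1]; omega),
          List.getElem_append_right (by rw [hta]; omega),
          List.getElem_replicate]
    · rw [if_neg (by omega)]
      rcases Nat.lt_or_ge i (b * (n+1)) with h3 | h3
      · rw [List.getD_eq_getElem _ _ (by rw [hlen]; omega),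
            List.getD_eq_getElem _ _ (by rw [hZ, Nat.mul_succ] at *; omega)]
        rw [List.getElem_append_right (by rw [hl1]; omega),
            List.getElem_drop]
        congr 1
        rw [hl1]
        omega
      · rw [List.getD_eq_default _ _ (by rw [hlen]; omega),
            List.getD_eq_default _ _ (by rw [hZ, Nat.mul_succ] at *; omega)]

/-- The "pattern" condition of Stirling permutations, in `getD` form. -/
def Pat (l : List ℕ) : Prop :=
  ∀ p q r : ℕ, p < q → q < r → r < l.length →
    l.getD p 0 = l.getD r 0 → l.getD p 0 ≤ l.getD q 0

lemma zeta_pat (b : ℕ) (hb : 0 < b) (s : ℕ → ℕ) :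
    ∀ n, (∀ t, 1 ≤ t → t ≤ n → s t ≤ b * (t - 1)) → Pat (zeta b s n) := by
  intro n
  induction n with
  | zero =>
    intro _ p q r hpq hqr hr
    rw [zeta_length] at hr
    exact absurd hr (by omega)
  | succ n ih =>
    intro hs
    have hw : s (n + 1) ≤ b * n := by
      have := hs (n+1) (by omega) le_rfl
      simpa using this
    have hIH : Pat (zeta b s n) := ih (fun t h1 h2 => hs t h1 (by omega))
    intro p q r hpq hqr hr heq
    rw [zeta_length] at hr
    have hbn : b * (n + 1) = b * n + b := Nat.mul_succ b n
    have hZlen : (zeta b s n).length = b * n := zeta_length b s n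
    simp only [zeta_succ_getD b s n hw] at heq ⊢
    have hZp := zeta_getD_le b s n p
    have hZq := zeta_getD_le b s n q
    have hZr := zeta_getD_le b s n (r - b)
    have hZr' := zeta_getD_le b s n r
    set w := s (n + 1) with hwdef
    -- case on region of q
    rcases Nat.lt_or_ge q w with hq | hq
    · -- q low, so p low
      rw [if_pos hq]
      rw [if_pos (by omega : p < w)] at heq ⊢
      rcases Nat.lt_or_ge r w with hrw | hrw
      · rw [if_pos hrw] at heq
        exact hIH p q r hpq hqr (by omega) heq
      · rcases Nat.lt_or_ge r (w + b) with hrb | hrb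
        · rw [if_neg (by omega), if_pos hrb] at heq
          omega
        · rw [if_neg (by omega), if_neg (by omega)] at heq
          exact hIH p q (r - b) hpq (by omega) (by rw [zeta_length]; omega) heq
    · rcases Nat.lt_or_ge q (w + b) with hqb | hqb
      · -- q in middle: value n+1, everything ≤ n+1
        rw [if_neg (show ¬ q < w by omega), if_pos hqb]
        split_ifs at heq ⊢ <;> omega
      · -- q high, so r high
        rw [if_neg (show ¬ q < w by omega), if_neg (show ¬ q < w + b by omega)]
        rw [if_neg (show ¬ r < w by omega), if_neg (show ¬ r < w + b by omega)]
          at heq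
        rcases Nat.lt_or_ge p w with hpw | hpw
        · rw [if_pos hpw] at heq ⊢
          exact hIH p (q - b) (r - b) (by omega) (by omega)
            (by rw [zeta_length]; omega) heq
        · rcases Nat.lt_or_ge p (w + b) with hpb | hpb
          · rw [if_neg (show ¬ p < w by omega), if_pos hpb] at heq
            omega
          · rw [if_neg (show ¬ p < w by omega),
                if_neg (show ¬ p < w + b by omega)] at heq ⊢
            exact hIH (p - b) (q - b) (r - b) (by omega) (by omega)
              (by rw [zeta_length]; omega) heq

/-! ### The main induction: `μ = ζ` -/

lemma mu_eq_zeta (b : ℕ) (hb : 0 < b) (s : ℕ → ℕ) :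
    ∀ N, (∀ t, 1 ≤ t → t ≤ N → s t ≤ b * (t - 1)) →
      (List.range (b * N)).map
        (fun idx => winv N (fun t => vval b (s t) (idx % b + 1)) (idx / b + 1))
        = zeta b s N := by
  intro N
  induction N with
  | zero => intro _; simp [zeta]
  | succ n IH =>
    intro hs
    have hw : s (n + 1) ≤ b * n := by
      have := hs (n+1) (by omega) le_rfl
      simpa using this
    have hZeq := IH (fun t h1 h2 => hs t h1 (by omega))
    have hZ : (zeta b s n).length = b * n := zeta_length b s n
    apply List.ext_getElem
    · rw [List.length_map, List.length_range, zeta_length]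
    intro i hi1 hi2
    rw [List.length_map, List.length_range] at hi1
    rw [List.getElem_map, List.getElem_range]
    set w := s (n + 1) with hwdef
    set q := i % b + 1 with hq
    set vfun := fun t => vval b (s t) q with hvfun
    have hqb : 1 ≤ q ∧ q ≤ b := by
      have := Nat.mod_lt i hb
      omega
    have hiq : i = b * (i / b) + (q - 1) := by
      have := Nat.div_add_mod i b
      omega
    have hv : ∀ t, 1 ≤ t → t ≤ n + 1 → vfun t < t := by
      intro t h1 h2
      exact vval_lt b (s t) q t hb hqb.1 hqb.2 h1 (hs t h1 h2)
    have hvtop : vfun (n + 1) = vval b w q := rfl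
    have hwin := vval_window b w q hb hqb.1 hqb.2
    have hidiv : i / b < n + 1 := Nat.div_lt_of_lt_mul hi1
    -- RHS in getD form
    rw [← List.getD_eq_getElem _ 0 hi2, zeta_succ_getD b s n hw]
    rcases Nat.lt_or_ge i w with h1 | h1
    · rw [if_pos h1]
      -- p < e
      have hlt : i / b < vval b w q := by
        have hmul : b * (i / b) < b * (vval b w q) := by omega
        exact Nat.lt_of_mul_lt_mul_left hmul
      have ha1 : 1 ≤ n + 1 := by omega
      have ha2 : 1 ≤ i / b + 1 := Nat.succ_le_succ (Nat.zero_le _)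
      have ha3 : i / b + 1 ≤ n + 1 := Nat.succ_le_succ (Nat.le_of_lt_succ hidiv)
      have ha4 : i / b + 1 ≠ vfun (n + 1) + 1 := by rw [hvtop]; omega
      rw [winv_restrict (n+1) vfun hv ha1 (i / b + 1) ha2 ha3 ha4]
      rw [if_pos (by rw [hvtop]; omega), Nat.add_sub_cancel]
      -- now relate to zeta b s n via hZeq
      have hi' : i < b * n := by omega
      rw [← hZeq, List.getD_eq_getElem _ 0
          (by rw [List.length_map, List.length_range]; exact hi'),
          List.getElem_map, List.getElem_range]
    · rcases Nat.lt_or_ge i (w + b) with h2 | h2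
      · rw [if_neg (by omega), if_pos h2]
        -- i = b * vval + (q - 1)
        have hieq : i / b = vval b w q := by
          rcases lt_trichotomy (i / b) (vval b w q) with h | h | h
          · exfalso
            have : b * (i / b + 1) ≤ b * (vval b w q) := Nat.mul_le_mul_left b h
            rw [Nat.mul_add, Nat.mul_one] at this
            omega
          · exact h
          · exfalso
            have : b * (vval b w q + 1) ≤ b * (i / b) := Nat.mul_le_mul_left b h
            rw [Nat.mul_add, Nat.mul_one] at this
            omega
        have : i / b + 1 = vfun (n + 1) + 1 := by rw [hvtop]; omega
        rw [this, winv_top (n+1) vfun hv (by omega)]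
      · rw [if_neg (by omega), if_neg (by omega)]
        have hgt : vval b w q < i / b := by
          have hmul : b * (vval b w q) < b * (i / b) := by omega
          exact Nat.lt_of_mul_lt_mul_left hmul
        have ha1 : 1 ≤ n + 1 := by omega
        have ha2 : 1 ≤ i / b + 1 := Nat.succ_le_succ (Nat.zero_le _)
        have ha3 : i / b + 1 ≤ n + 1 := Nat.succ_le_succ (Nat.le_of_lt_succ hidiv)
        have ha4 : i / b + 1 ≠ vfun (n + 1) + 1 := by rw [hvtop]; omega
        rw [winv_restrict (n+1) vfun hv ha1 (i / b + 1) ha2 ha3 ha4]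
        rw [if_neg (by rw [hvtop]; omega), Nat.add_sub_cancel, Nat.add_sub_cancel]
        have hi' : i - b < b * n := by rw [Nat.mul_succ] at hi1; omega
        rw [← hZeq, List.getD_eq_getElem _ 0
            (by rw [List.length_map, List.length_range]; exact hi'),
            List.getElem_map, List.getElem_range]
        have hmod : (i - b) % b = i % b := by
          conv_rhs => rw [show i = (i - b) + b by omega]
          rw [Nat.add_mod_right]
        have hdiv : (i - b) / b + 1 = i / b := by
          conv_rhs => rw [show i = (i - b) + b by omega]
          rw [Nat.add_div_right _ hb]
        rw [hmod, hdiv]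

end StirlingAux

/-- for an (a,b)-Dyck path with step sequence `u` and with
`u'` either `u` (case `Q = P₁`) or `u₀ - u` where `u₀ k = ⌊b(k-1)/a⌋` is the
step sequence of the lowest path (case `Q = P₀`), the multi-permutation `μ`
built from the greedy ceiling decompositions `v i` of `a·u'` via the selection
algorithm is (1) a `b`-Stirling permutation of size `a*n`, and (2) equal to
`ζ(a·u')`. -/
theorem mu_is_stirling_and_zeta (a b n : ℕ)
    (ha : 0 < a) (hb : 0 < b) (hn : 0 < n) (hab : Nat.Coprime a b)
    (u u' : ℕ → ℕ)
    (humono : ∀ k l, 1 ≤ k → k ≤ l → l ≤ a * n → u k ≤ u l)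
    (hubound : ∀ k, 1 ≤ k → k ≤ a * n → a * u k ≤ b * (k - 1))
    (hcase : (∀ t, 1 ≤ t → t ≤ a * n → u' t = u t) ∨
             (∀ t, 1 ≤ t → t ≤ a * n → u' t = b * (t - 1) / a - u t))
    (hu'bound : ∀ t, 1 ≤ t → t ≤ a * n → a * u' t ≤ b * (t - 1)) :
    IsStirling b (a * n) (muList a b (a * n) u') ∧
    muList a b (a * n) u' = zeta b (fun t => a * u' t) (a * n) := by
  classical
  set N := a * n with hN
  set s : ℕ → ℕ := fun t => a * u' t with hs
  have hsb : ∀ t, 1 ≤ t → t ≤ N → s t ≤ b * (t - 1) := fun t h1 h2 =>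
    hu'bound t h1 h2
  have hzeta : muList a b N u' = zeta b s N := by
    unfold muList
    exact StirlingAux.mu_eq_zeta b hb s N hsb
  refine ⟨?_, hzeta⟩
  rw [hzeta]
  refine ⟨StirlingAux.zeta_length b s N, ?_, ?_, ?_⟩
  · intro x h1 h2
    exact StirlingAux.zeta_count b s N x h1 h2
  · intro x hx
    exact StirlingAux.zeta_mem b s N x hx
  · intro p q r hpq hqr heq
    have hpat := StirlingAux.zeta_pat b hb s N hsb
    have hr : (r : ℕ) < (zeta b s N).length := r.isLt
    have := hpat p q r (by exact hpq) (by exact hqr) hr ?_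
    · rw [List.getD_eq_getElem _ _ p.isLt, List.getD_eq_getElem _ _ q.isLt]
        at this
      simpa [List.get_eq_getElem] using this
    · rw [List.getD_eq_getElem _ _ p.isLt, List.getD_eq_getElem _ _ r.isLt]
      simpa [List.get_eq_getElem] using heq
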